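/- Let Γ be a simple graph on a vertex set B with right-angled Coxeter group W = W_Γ, let Λ ⊆ B, and let u ∈ W with u ∉ W_Λ. Let v, v' ∈ W be such that: for every left descent i of v and every left descent j of u, one has i ≠ j and i, j are not adjacent in Γ (every letter at the start of v does not commute with any letter at the end of u⁻¹); and for every left descent i of v' and every right descent j of u, one has i ≠ j and i, j are not adjacent in Γ (every letter at the start of v' does not commute with any letter at the end of u). Let w, w' ∈ W satisfy ℓ(w) ≤ ℓ(v) and ℓ(w') ≤ ℓ(v'). Then w · v⁻¹ · u · v' · w' ∉ W_Λ. -/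

import Mathlib

/-- The right-angled Coxeter matrix of a simple graph `Γ`: `M i i = 1`, `M i j = 2`
when `i, j` are adjacent in `Γ`, and `M i j = 0` (representing `∞`) otherwise. -/
def racMatrix {V : Type*} [DecidableEq V] (Γ : SimpleGraph V) [DecidableRel Γ.Adj] :
    CoxeterMatrix V where
  M := Matrix.of fun i j => if i = j then 1 else if Γ.Adj i j then 2 else 0
  isSymm := by
    ext i j
    simp only [Matrix.transpose_apply, Matrix.of_apply]
    by_cases h : i = j
    · subst h; simp
    · rw [if_neg h, if_neg (Ne.symm h)]
      simp only [Γ.adj_comm i j]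
  diagonal i := by simp
  off_diagonal i j h := by
    simp only [Matrix.of_apply, if_neg h]
    split <;> omega

/-- The standard parabolic subgroup `W_Λ` of the right-angled Coxeter group of `Γ`,
generated by the simple reflections indexed by `Λ`. -/
def racParabolic {V : Type*} [DecidableEq V] (Γ : SimpleGraph V) [DecidableRel Γ.Adj]
    (Λ : Set V) : Subgroup (racMatrix Γ).Group :=
  Subgroup.closure ((racMatrix Γ).simple '' Λ)


section RacWords
set_option linter.unusedSectionVars false

variable {V : Type*} [DecidableEq V] (Γ : SimpleGraph V) [DecidableRel Γ.Adj]

/-- `RacCC Γ i ω` : the word `ω` contains a letter `i` preceded only by letters adjacent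
to `i` (so that `s i` can cancel into `ω` from the left). -/
inductive RacCC (i : V) : List V → Prop
  | head (ω : List V) : RacCC i (i :: ω)
  | cons {j : V} {ω : List V} : Γ.Adj i j → RacCC i ω → RacCC i (j :: ω)

variable {Γ}

theorem racCC_nil_iff {i : V} : RacCC Γ i [] ↔ False := by
  constructor
  · rintro ⟨⟩
  · exact False.elim

theorem racCC_cons_iff {i j : V} {ω : List V} :
    RacCC Γ i (j :: ω) ↔ j = i ∨ (Γ.Adj i j ∧ RacCC Γ i ω) := by
  constructor
  · intro h
    rcases h with _ | ⟨hadj, h⟩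
    · exact Or.inl rfl
    · exact Or.inr ⟨hadj, ‹_›⟩
  · rintro (rfl | ⟨hadj, h⟩)
    · exact RacCC.head ω
    · exact RacCC.cons hadj h

instance racCC_decidable (i : V) : ∀ ω : List V, Decidable (RacCC Γ i ω)
  | [] => isFalse (by rw [racCC_nil_iff]; exact id)
  | j :: ω =>
      haveI := racCC_decidable i ω
      decidable_of_iff _ racCC_cons_iff.symm

theorem racCC_iff {i : V} {ω : List V} :
    RacCC Γ i ω ↔ ∃ α β, ω = α ++ i :: β ∧ ∀ j ∈ α, Γ.Adj i j := by
  constructor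
  · intro h
    induction h with
    | head ω => exact ⟨[], ω, rfl, by simp⟩
    | cons hadj h ih =>
        obtain ⟨α, β, rfl, hα⟩ := ih
        exact ⟨_ :: α, β, rfl, by
          intro x hx
          rcases List.mem_cons.mp hx with rfl | hx
          · exact hadj
          · exact hα x hx⟩
  · rintro ⟨α, β, rfl, hα⟩
    induction α with
    | nil => exact RacCC.head β
    | cons j α ih =>
        exact RacCC.cons (hα j (by simp)) (ih fun x hx => hα x (by simp [hx]))

theorem racCC_mem {i : V} {ω : List V} (h : RacCC Γ i ω) : i ∈ ω := by
  induction h with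
  | head => simp
  | cons _ _ ih => simp [ih]

theorem racCC_append_iff {i : V} {α β : List V} :
    RacCC Γ i (α ++ β) ↔ RacCC Γ i α ∨ ((∀ j ∈ α, Γ.Adj i j) ∧ RacCC Γ i β) := by
  induction α with
  | nil => simp [racCC_nil_iff]
  | cons j α ih =>
      simp only [List.cons_append, racCC_cons_iff, ih, List.mem_cons]
      constructor
      · rintro (rfl | ⟨hadj, (h | ⟨hall, h⟩)⟩)
        · exact Or.inl (Or.inl rfl)
        · exact Or.inl (Or.inr ⟨hadj, h⟩)
        · exact Or.inr ⟨by rintro x (rfl | hx); exacts [hadj, hall x hx], h⟩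
      · rintro ((rfl | ⟨hadj, h⟩) | ⟨hall, h⟩)
        · exact Or.inl rfl
        · exact Or.inr ⟨hadj, Or.inl h⟩
        · exact Or.inr ⟨hall j (Or.inl rfl), Or.inr ⟨fun x hx => hall x (Or.inr hx), h⟩⟩

theorem racCC_not_of_all_adj {i : V} {α : List V} (h : ∀ j ∈ α, Γ.Adj i j) :
    ¬ RacCC Γ i α := fun hc => Γ.irrefl (h i (racCC_mem hc))

variable (Γ) in
/-- A word is (combinatorially) reduced if no letter can cancel with a later letter. -/
def RacRed : List V → Prop
  | [] => True
  | i :: ω => ¬ RacCC Γ i ω ∧ RacRed ω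

@[simp] theorem racRed_nil : RacRed Γ ([] : List V) := trivial

theorem racRed_cons_iff {i : V} {ω : List V} :
    RacRed Γ (i :: ω) ↔ ¬ RacCC Γ i ω ∧ RacRed Γ ω := Iff.rfl

theorem racRed_append_right {α β : List V} (h : RacRed Γ (α ++ β)) : RacRed Γ β := by
  induction α with
  | nil => exact h
  | cons j α ih => exact ih ((racRed_cons_iff.mp h).2)

end RacWords
section RacWords2
set_option linter.unusedSectionVars false

variable {V : Type*} [DecidableEq V] {Γ : SimpleGraph V} [DecidableRel Γ.Adj]

variable (Γ) in
/-- Left multiplication of `s i` on a word: cancel the first cancellable occurrence of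
`i` if there is one; otherwise prepend `i`. -/
def racSig (i : V) : List V → List V
  | [] => [i]
  | j :: ω => if j = i then ω
      else if Γ.Adj i j ∧ RacCC Γ i ω then j :: racSig i ω
      else i :: j :: ω

theorem racSig_of_not_cc {i : V} {ω : List V} (h : ¬ RacCC Γ i ω) :
    racSig Γ i ω = i :: ω := by
  cases ω with
  | nil => rfl
  | cons j ω =>
      rw [racCC_cons_iff] at h
      push_neg at h
      rw [racSig, if_neg h.1, if_neg (by rintro ⟨h1, h2⟩; exact h.2 h1 h2)]

theorem racSig_cancel {i : V} {α β : List V} (hα : ∀ j ∈ α, Γ.Adj i j) :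
    racSig Γ i (α ++ i :: β) = α ++ β := by
  induction α with
  | nil => simp [racSig]
  | cons j α ih =>
      have hadj : Γ.Adj i j := hα j (by simp)
      have hcc : RacCC Γ i (α ++ i :: β) :=
        racCC_iff.mpr ⟨α, β, rfl, fun x hx => hα x (by simp [hx])⟩
      rw [List.cons_append, racSig, if_neg hadj.ne', if_pos ⟨hadj, hcc⟩,
        ih fun x hx => hα x (by simp [hx])]
      rfl

theorem racSig_of_cc {i : V} {ω : List V} (h : RacCC Γ i ω) :
    ∃ α β, ω = α ++ i :: β ∧ (∀ j ∈ α, Γ.Adj i j) ∧ racSig Γ i ω = α ++ β := by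
  induction ω with
  | nil => exact absurd h racCC_nil_iff.mp
  | cons j ω ih =>
      rcases racCC_cons_iff.mp h with rfl | ⟨hadj, hcc⟩
      · exact ⟨[], ω, rfl, by simp, by rw [racSig, if_pos rfl]; rfl⟩
      · obtain ⟨α, β, rfl, hα, hs⟩ := ih hcc
        refine ⟨j :: α, β, rfl, ?_, ?_⟩
        · intro x hx
          rcases List.mem_cons.mp hx with rfl | hx
          · exact hadj
          · exact hα x hx
        · rw [racSig, if_neg hadj.ne', if_pos ⟨hadj, hcc⟩, hs]
          rfl

theorem racCC_removal {i k : V} {α β : List V} (hadj : Γ.Adj k i)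
    (hα : ∀ j ∈ α, Γ.Adj i j) (h : RacCC Γ k (α ++ β)) : RacCC Γ k (α ++ i :: β) := by
  rcases racCC_append_iff.mp h with h | ⟨hall, h⟩
  · exact racCC_append_iff.mpr (Or.inl h)
  · exact racCC_append_iff.mpr (Or.inr ⟨hall, RacCC.cons hadj h⟩)

theorem racRed_sig {i : V} {ω : List V} (h : RacRed Γ ω) : RacRed Γ (racSig Γ i ω) := by
  induction ω with
  | nil => exact ⟨racCC_nil_iff.mp, trivial⟩
  | cons j ω ih =>
      obtain ⟨hj, hω⟩ := h
      by_cases e : j = i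
      · subst e
        rw [racSig, if_pos rfl]
        exact hω
      · by_cases c : Γ.Adj i j ∧ RacCC Γ i ω
        · rw [racSig, if_neg e, if_pos c]
          refine ⟨?_, ih hω⟩
          obtain ⟨α, β, rfl, hα, hs⟩ := racSig_of_cc c.2
          rw [hs]
          intro hc
          exact hj (racCC_removal c.1.symm hα hc)
        · rw [racSig, if_neg e, if_neg c]
          exact ⟨fun hc => by
            rcases racCC_cons_iff.mp hc with rfl | hh
            exacts [e rfl, c hh], hj, hω⟩

end RacWords2
section RacWords3
set_option linter.unusedSectionVars false

variable {V : Type*} [DecidableEq V] {Γ : SimpleGraph V} [DecidableRel Γ.Adj]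

theorem racSig_cons_cancel (i : V) (ω : List V) : racSig Γ i (i :: ω) = ω := by
  rw [racSig, if_pos rfl]

theorem racSig_cons_commute {i j : V} {ω : List V} (e : j ≠ i)
    (c : Γ.Adj i j ∧ RacCC Γ i ω) : racSig Γ i (j :: ω) = j :: racSig Γ i ω := by
  rw [racSig, if_neg e, if_pos c]

theorem racSig_cons_prepend {i j : V} {ω : List V} (e : j ≠ i)
    (c : ¬ (Γ.Adj i j ∧ RacCC Γ i ω)) : racSig Γ i (j :: ω) = i :: j :: ω := by
  rw [racSig, if_neg e, if_neg c]

theorem list_split3 {X : Type*} {α β γ δ : List X} {i j : X} (h : α ++ i :: β = γ ++ j :: δ) :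
    (∃ μ, γ = α ++ i :: μ ∧ β = μ ++ j :: δ) ∨ (α = γ ∧ i = j ∧ β = δ) ∨
    (∃ μ, α = γ ++ j :: μ ∧ δ = μ ++ i :: β) := by
  induction α generalizing γ with
  | nil =>
      cases γ with
      | nil =>
          simp only [List.nil_append, List.cons.injEq] at h
          exact Or.inr (Or.inl ⟨rfl, h.1, h.2⟩)
      | cons c γ =>
          simp only [List.nil_append, List.cons_append, List.cons.injEq] at h
          obtain ⟨rfl, rfl⟩ := h
          exact Or.inl ⟨γ, rfl, rfl⟩
  | cons a α ih =>
      cases γ with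
      | nil =>
          simp only [List.cons_append, List.nil_append, List.cons.injEq] at h
          obtain ⟨rfl, rfl⟩ := h
          exact Or.inr (Or.inr ⟨α, rfl, rfl⟩)
      | cons c γ =>
          simp only [List.cons_append, List.cons.injEq] at h
          obtain ⟨rfl, h⟩ := h
          rcases ih h with ⟨μ, rfl, rfl⟩ | ⟨rfl, rfl, rfl⟩ | ⟨μ, rfl, rfl⟩
          · exact Or.inl ⟨μ, rfl, rfl⟩
          · exact Or.inr (Or.inl ⟨rfl, rfl, rfl⟩)
          · exact Or.inr (Or.inr ⟨μ, rfl, rfl⟩)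

variable (Γ) in
/-- One commutation move on words. -/
inductive RacBr : List V → List V → Prop
  | swap (η θ : List V) {a b : V} (h : Γ.Adj a b) : RacBr (η ++ a :: b :: θ) (η ++ b :: a :: θ)

theorem racBr_symm {ω ω' : List V} (h : RacBr Γ ω ω') : RacBr Γ ω' ω := by
  cases h with
  | swap η θ hab => exact RacBr.swap η θ hab.symm

theorem racBr_cons {ω ω' : List V} (j : V) (h : RacBr Γ ω ω') :
    RacBr Γ (j :: ω) (j :: ω') := by
  cases h with
  | swap η θ hab => exact RacBr.swap (j :: η) θ hab

theorem racBr_length {ω ω' : List V} (h : RacBr Γ ω ω') : ω.length = ω'.length := by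
  cases h with
  | swap η θ hab => simp

theorem racBr_mem {ω ω' : List V} (i : V) (h : RacBr Γ ω ω') : i ∈ ω ↔ i ∈ ω' := by
  cases h with
  | swap η θ hab => simp; tauto

theorem racCC_br {i : V} {ω ω' : List V} (h : RacBr Γ ω ω') :
    RacCC Γ i ω ↔ RacCC Γ i ω' := by
  cases h with
  | swap η θ hab =>
      induction η with
      | nil =>
          simp only [List.nil_append, racCC_cons_iff]
          constructor
          · rintro (rfl | ⟨hia, (rfl | ⟨hib, hcc⟩)⟩)
            · exact Or.inr ⟨hab, Or.inl rfl⟩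
            · exact Or.inl rfl
            · exact Or.inr ⟨hib, Or.inr ⟨hia, hcc⟩⟩
          · rintro (rfl | ⟨hib, (rfl | ⟨hia, hcc⟩)⟩)
            · exact Or.inr ⟨hab.symm, Or.inl rfl⟩
            · exact Or.inl rfl
            · exact Or.inr ⟨hia, Or.inr ⟨hib, hcc⟩⟩
      | cons x η ih =>
          simp only [List.cons_append, racCC_cons_iff, ih]

theorem racRed_br {ω ω' : List V} (h : RacBr Γ ω ω') : RacRed Γ ω ↔ RacRed Γ ω' := by
  cases h with
  | swap η θ hab =>
      induction η with
      | nil =>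
          rename_i a b
          simp only [List.nil_append, racRed_cons_iff]
          have i1 : RacCC Γ a (b :: θ) ↔ RacCC Γ a θ := by
            rw [racCC_cons_iff]; simp [hab.ne', hab]
          have i2 : RacCC Γ b (a :: θ) ↔ RacCC Γ b θ := by
            rw [racCC_cons_iff]; simp [hab.ne, hab.symm]
          rw [i1, i2]; tauto
      | cons x η ih =>
          have hcc := racCC_br (i := x) (RacBr.swap η θ hab)
          simp only [List.cons_append, racRed_cons_iff, ih, hcc]

end RacWords3
section RacWords4
set_option linter.unusedSectionVars false

variable {V : Type*} [DecidableEq V] {Γ : SimpleGraph V} [DecidableRel Γ.Adj]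

variable (Γ) in
/-- Words modulo commutation moves. -/
def RacQ := Quot (RacBr Γ)

variable (Γ) in
/-- The class of a word. -/
def racQm (ω : List V) : RacQ Γ := Quot.mk _ ω

/-- Prepending a letter, on classes of words. -/
def racQcons (j : V) : RacQ Γ → RacQ Γ :=
  Quot.map (j :: ·) (fun _ _ h => racBr_cons j h)

@[simp] theorem racQcons_mk (j : V) (ω : List V) :
    racQcons j (racQm Γ ω) = racQm Γ (j :: ω) := rfl

/-- Length of a class of words. -/
def racQlen : RacQ Γ → ℕ :=
  Quot.lift List.length (fun _ _ h => racBr_length h)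

@[simp] theorem racQlen_mk (ω : List V) : racQlen (racQm Γ ω) = ω.length := rfl

/-- Membership of a letter in a class of words. -/
def racQmem (i : V) : RacQ Γ → Prop :=
  Quot.lift (fun ω => i ∈ ω) (fun _ _ h => propext (racBr_mem i h))

@[simp] theorem racQmem_mk (i : V) (ω : List V) :
    racQmem i (racQm Γ ω) = (i ∈ ω) := rfl

/-- Cancellability of a letter in a class of words. -/
def racQcc (i : V) : RacQ Γ → Prop :=
  Quot.lift (RacCC Γ i) (fun _ _ h => propext (racCC_br h))

@[simp] theorem racQcc_mk (i : V) (ω : List V) :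
    racQcc i (racQm Γ ω) = RacCC Γ i ω := rfl

/-- Reducedness of a class of words. -/
def racQred : RacQ Γ → Prop :=
  Quot.lift (RacRed Γ) (fun _ _ h => propext (racRed_br h))

@[simp] theorem racQred_mk (ω : List V) : racQred (racQm Γ ω) = RacRed Γ ω := rfl

theorem racQm_bubble {i : V} {α : List V} (β : List V) (hα : ∀ j ∈ α, Γ.Adj i j) :
    racQm Γ (i :: (α ++ β)) = racQm Γ (α ++ i :: β) := by
  induction α with
  | nil => rfl
  | cons j α ih =>
      have h1 : racQm Γ (i :: (j :: α ++ β)) = racQm Γ (j :: i :: (α ++ β)) :=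
        Quot.sound (RacBr.swap [] (α ++ β) (hα j (by simp)))
      rw [h1, List.cons_append]
      have h2 := ih (fun x hx => hα x (by simp [hx]))
      calc racQm Γ (j :: (i :: (α ++ β))) = racQcons j (racQm Γ (i :: (α ++ β))) := rfl
        _ = racQcons j (racQm Γ (α ++ i :: β)) := by rw [h2]
        _ = racQm Γ (j :: (α ++ i :: β)) := rfl

theorem racSig_sig {i : V} {ω : List V} (h : RacRed Γ ω) :
    racQm Γ (racSig Γ i (racSig Γ i ω)) = racQm Γ ω := by
  by_cases c : RacCC Γ i ω
  · obtain ⟨α, β, rfl, hα, hs⟩ := racSig_of_cc c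
    rw [hs]
    have hni : ¬ RacCC Γ i (α ++ β) := by
      intro hc
      rcases racCC_append_iff.mp hc with h' | ⟨hall, h'⟩
      · exact racCC_not_of_all_adj hα h'
      · exact (racRed_append_right (α := α) h).1 h'
    rw [racSig_of_not_cc hni]
    exact racQm_bubble β hα
  · rw [racSig_of_not_cc c, racSig_cons_cancel]

theorem racSig_braid_aux1 {i j : V} {ω : List V} (hadj : Γ.Adj i j)
    (hci : RacCC Γ i ω) (hcj : ¬ RacCC Γ j ω) :
    racSig Γ i (racSig Γ j ω) = racSig Γ j (racSig Γ i ω) := by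
  obtain ⟨α, β, rfl, hα, hs⟩ := racSig_of_cc hci
  rw [racSig_of_not_cc hcj, racSig_cons_commute hadj.ne' ⟨hadj, hci⟩, hs]
  have : ¬ RacCC Γ j (α ++ β) := fun hc => hcj (racCC_removal hadj.symm hα hc)
  rw [racSig_of_not_cc this]

theorem racSig_braid_aux2 {i j : V} {α μ δ : List V} (hadj : Γ.Adj i j)
    (hα : ∀ x ∈ α, Γ.Adj i x) (hγ : ∀ x ∈ α ++ i :: μ, Γ.Adj j x) :
    racSig Γ j (racSig Γ i (α ++ i :: (μ ++ j :: δ))) =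
      racSig Γ i (racSig Γ j (α ++ i :: (μ ++ j :: δ))) := by
  have hαμ : ∀ x ∈ α ++ μ, Γ.Adj j x := by
    intro x hx
    rcases List.mem_append.mp hx with hx | hx
    · exact hγ x (by simp [hx])
    · exact hγ x (by simp [hx])
  have e1 : racSig Γ i (α ++ i :: (μ ++ j :: δ)) = (α ++ μ) ++ j :: δ := by
    rw [racSig_cancel hα, List.append_assoc]
  have e2 : racSig Γ j ((α ++ μ) ++ j :: δ) = (α ++ μ) ++ δ := racSig_cancel hαμ
  have e3 : racSig Γ j (α ++ i :: (μ ++ j :: δ)) = (α ++ i :: μ) ++ δ := by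
    have := racSig_cancel (Γ := Γ) (α := α ++ i :: μ) (β := δ) hγ
    rwa [List.append_assoc, List.cons_append] at this
  rw [e1, e2, e3, show (α ++ i :: μ) ++ δ = α ++ i :: (μ ++ δ) by simp,
    racSig_cancel hα]
  simp [List.append_assoc]

theorem racSig_braid {i j : V} {ω : List V} (hadj : Γ.Adj i j) :
    racQm Γ (racSig Γ i (racSig Γ j ω)) = racQm Γ (racSig Γ j (racSig Γ i ω)) := by
  by_cases ci : RacCC Γ i ω <;> by_cases cj : RacCC Γ j ω
  · obtain ⟨α, β, hω, hα, _⟩ := racSig_of_cc ci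
    obtain ⟨γ, δ, hω', hγ, _⟩ := racSig_of_cc cj
    rw [hω] at hω'
    rcases list_split3 hω' with ⟨μ, hg, hb⟩ | ⟨_, hij, _⟩ | ⟨μ, ha, hd⟩
    · subst hω; subst hb; subst hg
      exact congrArg (racQm Γ) (racSig_braid_aux2 hadj hα hγ).symm
    · exact absurd hij hadj.ne
    · subst ha; subst hd; subst hω
      rw [show (γ ++ j :: μ) ++ i :: β = γ ++ j :: (μ ++ i :: β) by simp]
      exact congrArg (racQm Γ) (racSig_braid_aux2 hadj.symm hγ hα)
  · exact congrArg (racQm Γ) (racSig_braid_aux1 hadj ci cj)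
  · exact congrArg (racQm Γ) (racSig_braid_aux1 hadj.symm cj ci).symm
  · rw [racSig_of_not_cc cj, racSig_of_not_cc ci,
      racSig_of_not_cc (ω := i :: ω) (fun hc => by
        rcases racCC_cons_iff.mp hc with h | h
        exacts [hadj.ne h, cj h.2]),
      racSig_of_not_cc (ω := j :: ω) (fun hc => by
        rcases racCC_cons_iff.mp hc with h | h
        exacts [hadj.ne h.symm, ci h.2])]
    exact Quot.sound (RacBr.swap [] ω hadj)

theorem racSig_br {i : V} {ω ω' : List V} (h : RacBr Γ ω ω') :
    racQm Γ (racSig Γ i ω) = racQm Γ (racSig Γ i ω') := by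
  cases h with
  | swap η θ hab =>
      rename_i a b
      induction η with
      | nil =>
          by_cases ea : a = i
          · subst ea
            rw [List.nil_append, List.nil_append, racSig_cons_cancel,
              racSig_cons_commute (hab.ne') ⟨hab, RacCC.head θ⟩, racSig_cons_cancel]
          · by_cases eb : b = i
            · subst eb
              rw [List.nil_append, List.nil_append, racSig_cons_cancel,
                racSig_cons_commute (hab.ne) ⟨hab.symm, RacCC.head θ⟩, racSig_cons_cancel]
            · by_cases c : Γ.Adj i a ∧ Γ.Adj i b ∧ RacCC Γ i θ
              · rw [List.nil_append, List.nil_append,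
                  racSig_cons_commute ea ⟨c.1, racCC_cons_iff.mpr (Or.inr ⟨c.2.1, c.2.2⟩)⟩,
                  racSig_cons_commute eb ⟨c.2.1, c.2.2⟩,
                  racSig_cons_commute eb ⟨c.2.1, racCC_cons_iff.mpr (Or.inr ⟨c.1, c.2.2⟩)⟩,
                  racSig_cons_commute ea ⟨c.1, c.2.2⟩]
                exact Quot.sound (RacBr.swap [] _ hab)
              · have hca : ¬ (Γ.Adj i a ∧ RacCC Γ i (b :: θ)) := by
                  rintro ⟨h1, h2⟩
                  rcases racCC_cons_iff.mp h2 with h3 | h3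
                  · exact eb h3
                  · exact c ⟨h1, h3.1, h3.2⟩
                have hcb : ¬ (Γ.Adj i b ∧ RacCC Γ i (a :: θ)) := by
                  rintro ⟨h1, h2⟩
                  rcases racCC_cons_iff.mp h2 with h3 | h3
                  · exact ea h3
                  · exact c ⟨h3.1, h1, h3.2⟩
                rw [List.nil_append, List.nil_append,
                  racSig_cons_prepend ea hca, racSig_cons_prepend eb hcb]
                exact Quot.sound (RacBr.swap [i] θ hab)
      | cons x η ih =>
          by_cases ex : x = i
          · subst ex
            rw [List.cons_append, List.cons_append, racSig_cons_cancel, racSig_cons_cancel]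
            exact Quot.sound (RacBr.swap η θ hab)
          · have hcc := racCC_br (i := i) (RacBr.swap η θ hab)
            by_cases cx : Γ.Adj i x ∧ RacCC Γ i (η ++ a :: b :: θ)
            · rw [List.cons_append, List.cons_append,
                racSig_cons_commute ex cx, racSig_cons_commute ex ⟨cx.1, hcc.mp cx.2⟩]
              calc racQm Γ (x :: racSig Γ i (η ++ a :: b :: θ))
                  = racQcons x (racQm Γ (racSig Γ i (η ++ a :: b :: θ))) := rfl
                _ = racQcons x (racQm Γ (racSig Γ i (η ++ b :: a :: θ))) := by rw [ih]
                _ = racQm Γ (x :: racSig Γ i (η ++ b :: a :: θ)) := rfl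
            · have cx' : ¬ (Γ.Adj i x ∧ RacCC Γ i (η ++ b :: a :: θ)) := by
                rintro ⟨h1, h2⟩
                exact cx ⟨h1, hcc.mpr h2⟩
              rw [List.cons_append, List.cons_append,
                racSig_cons_prepend ex cx, racSig_cons_prepend ex cx']
              exact Quot.sound (RacBr.swap (i :: x :: η) θ hab)

end RacWords4
section RacGroup
set_option linter.unusedSectionVars false

open CoxeterSystem

variable {V : Type*} [DecidableEq V] (Γ : SimpleGraph V) [DecidableRel Γ.Adj]

/-- The Coxeter system of the right-angled Coxeter group of `Γ`. -/
abbrev racCS : CoxeterSystem (racMatrix Γ) (racMatrix Γ).Group :=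
  (racMatrix Γ).toCoxeterSystem

variable {Γ}

theorem racComm {i j : V} (h : Γ.Adj i j) :
    (racCS Γ).simple i * (racCS Γ).simple j = (racCS Γ).simple j * (racCS Γ).simple i := by
  have h2 : racMatrix Γ i j = 2 := by
    show (racMatrix Γ).M i j = 2
    simp [racMatrix, h.ne, h]
  have hp := (racCS Γ).simple_mul_simple_pow i j
  rw [h2, pow_two] at hp
  have h3 : (racCS Γ).simple i * (racCS Γ).simple j = ((racCS Γ).simple i * (racCS Γ).simple j)⁻¹ :=
    eq_inv_of_mul_eq_one_left hp
  rw [h3, mul_inv_rev, (racCS Γ).inv_simple, (racCS Γ).inv_simple]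

theorem racCommWord {i : V} {α : List V} (h : ∀ x ∈ α, Γ.Adj i x) :
    (racCS Γ).simple i * (racCS Γ).wordProd α = (racCS Γ).wordProd α * (racCS Γ).simple i := by
  induction α with
  | nil => simp
  | cons j α ih =>
      rw [(racCS Γ).wordProd_cons, ← mul_assoc, racComm (h j (by simp)), mul_assoc,
        ih fun x hx => h x (by simp [hx]), mul_assoc]

theorem racPiCancel {i : V} {α β : List V} (h : ∀ x ∈ α, Γ.Adj i x) :
    (racCS Γ).wordProd (α ++ i :: β) = (racCS Γ).simple i * (racCS Γ).wordProd (α ++ β) := by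
  rw [(racCS Γ).wordProd_append, (racCS Γ).wordProd_cons, (racCS Γ).wordProd_append, ← mul_assoc,
    ← racCommWord h, mul_assoc]

theorem racPiSig (i : V) (ω : List V) :
    (racCS Γ).wordProd (racSig Γ i ω) = (racCS Γ).simple i * (racCS Γ).wordProd ω := by
  by_cases hc : RacCC Γ i ω
  · obtain ⟨α, β, rfl, hα, hs⟩ := racSig_of_cc hc
    rw [hs, racPiCancel hα, ← mul_assoc, (racCS Γ).simple_mul_simple_self, one_mul]
  · rw [racSig_of_not_cc hc, (racCS Γ).wordProd_cons]

theorem racPiBr {ω ω' : List V} (h : RacBr Γ ω ω') :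
    (racCS Γ).wordProd ω = (racCS Γ).wordProd ω' := by
  cases h with
  | swap η θ hab =>
      rename_i a b
      simp only [(racCS Γ).wordProd_append, (racCS Γ).wordProd_cons]
      rw [← mul_assoc ((racCS Γ).simple a), racComm hab, mul_assoc]

theorem racShorten {ω : List V} (hn : ¬ RacRed Γ ω) :
    ∃ ω', (racCS Γ).wordProd ω' = (racCS Γ).wordProd ω ∧ ω'.length + 2 = ω.length ∧
      ∀ x ∈ ω', x ∈ ω := by
  induction ω with
  | nil => exact absurd trivial hn
  | cons j ω ih =>
      by_cases hc : RacCC Γ j ω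
      · obtain ⟨α, β, rfl, hα, _⟩ := racSig_of_cc hc
        refine ⟨α ++ β, ?_, by simp only [List.length_append, List.length_cons]; omega, ?_⟩
        · rw [(racCS Γ).wordProd_cons, racPiCancel hα, ← mul_assoc,
            (racCS Γ).simple_mul_simple_self, one_mul]
        · intro x hx
          simp only [List.mem_append, List.mem_cons] at hx ⊢
          tauto
      · have hr : ¬ RacRed Γ ω := fun h => hn ⟨hc, h⟩
        obtain ⟨ω', h1, h2, h3⟩ := ih hr
        refine ⟨j :: ω', by rw [(racCS Γ).wordProd_cons, (racCS Γ).wordProd_cons, h1],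
          by simpa using h2, ?_⟩
        intro x hx
        rcases List.mem_cons.mp hx with rfl | hx
        · exact List.mem_cons_self
        · exact List.mem_cons_of_mem j (h3 x hx)

theorem racRed_of_isReduced {ω : List V} (h : (racCS Γ).IsReduced ω) : RacRed Γ ω := by
  by_contra hn
  obtain ⟨ω', h1, h2, _⟩ := racShorten hn
  have := (racCS Γ).length_wordProd_le ω'
  rw [h1] at this
  rw [CoxeterSystem.IsReduced] at h
  omega

variable (Γ) in
/-- Reduced classes of words. -/
def RacQR := {q : RacQ Γ // racQred q}

variable (Γ) in
/-- The action of a simple generator on reduced classes of words. -/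
def racQsig (i : V) : RacQ Γ → RacQ Γ :=
  Quot.lift (fun ω => racQm Γ (racSig Γ i ω)) (fun _ _ h => racSig_br h)

@[simp] theorem racQsig_mk (i : V) (ω : List V) :
    racQsig Γ i (racQm Γ ω) = racQm Γ (racSig Γ i ω) := rfl

theorem racQred_qsig (i : V) {q : RacQ Γ} (h : racQred q) : racQred (racQsig Γ i q) := by
  induction q using Quot.ind with
  | _ ω => exact racRed_sig h

variable (Γ) in
/-- The simple generators acting on reduced classes of words. -/
def racE (i : V) : Equiv.Perm (RacQR Γ) where
  toFun q := ⟨racQsig Γ i q.1, racQred_qsig i q.2⟩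
  invFun q := ⟨racQsig Γ i q.1, racQred_qsig i q.2⟩
  left_inv q := by
    obtain ⟨q, hq⟩ := q
    induction q using Quot.ind with
    | _ ω =>
        apply Subtype.ext
        exact racSig_sig hq
  right_inv q := by
    obtain ⟨q, hq⟩ := q
    induction q using Quot.ind with
    | _ ω =>
        apply Subtype.ext
        exact racSig_sig hq

theorem racE_invol (i : V) (q : RacQR Γ) : racE Γ i (racE Γ i q) = q :=
  (racE Γ i).left_inv q

theorem racE_braid {i j : V} (h : Γ.Adj i j) (q : RacQR Γ) :
    racE Γ i (racE Γ j q) = racE Γ j (racE Γ i q) := by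
  obtain ⟨q, hq⟩ := q
  induction q using Quot.ind with
  | _ ω =>
      apply Subtype.ext
      exact racSig_braid h

theorem racE_liftable : CoxeterMatrix.IsLiftable (racMatrix Γ) (fun i => racE Γ i) := by
  intro i j
  by_cases hij : i = j
  · subst hij
    have : racMatrix Γ i i = 1 := (racMatrix Γ).diagonal i
    rw [this, pow_one]
    ext q
    exact racE_invol i q
  · by_cases hadj : Γ.Adj i j
    · have : racMatrix Γ i j = 2 := by
        show (racMatrix Γ).M i j = 2
        simp [racMatrix, hij, hadj]
      rw [this, pow_two]
      ext q
      show racE Γ i (racE Γ j (racE Γ i (racE Γ j q))) = q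
      rw [← racE_braid hadj (racE Γ j q), racE_invol, racE_invol]
    · have : racMatrix Γ i j = 0 := by
        show (racMatrix Γ).M i j = 0
        simp [racMatrix, hij, hadj]
      rw [this, pow_zero]

variable (Γ) in
/-- The homomorphism from the right-angled Coxeter group to permutations of reduced
classes of words. -/
noncomputable def racF : (racMatrix Γ).Group →* Equiv.Perm (RacQR Γ) :=
  (racCS Γ).lift ⟨fun i => racE Γ i, racE_liftable⟩

variable (Γ) in
/-- The empty reduced class. -/
def racQ0 : RacQR Γ := ⟨racQm Γ [], by simp⟩

theorem racF_key : ∀ (ω : List V), RacRed Γ ω →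
    (racF Γ ((racCS Γ).wordProd ω) (racQ0 Γ)).1 = racQm Γ ω := by
  intro ω
  induction ω with
  | nil =>
      intro _
      rw [(racCS Γ).wordProd_nil, map_one]
      rfl
  | cons i ω ih =>
      intro h
      rw [(racCS Γ).wordProd_cons, map_mul]
      have hs : racF Γ ((racCS Γ).simple i) = racE Γ i := by
        unfold racF
        exact (racCS Γ).lift_apply_simple racE_liftable i
      rw [Equiv.Perm.mul_apply, hs]
      have h2 := ih h.2
      show (racQsig Γ i (racF Γ ((racCS Γ).wordProd ω) (racQ0 Γ)).1) = racQm Γ (i :: ω)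
      rw [h2, racQsig_mk, racSig_of_not_cc h.1]

theorem racRedWord_unique {ω ω' : List V} (h : RacRed Γ ω) (h' : RacRed Γ ω')
    (he : (racCS Γ).wordProd ω = (racCS Γ).wordProd ω') : racQm Γ ω = racQm Γ ω' := by
  rw [← racF_key ω h, ← racF_key ω' h', he]

theorem racRed_length {ω : List V} (h : RacRed Γ ω) :
    (racCS Γ).length ((racCS Γ).wordProd ω) = ω.length := by
  obtain ⟨ω', hlen, hp⟩ := (racCS Γ).exists_reduced_word ((racCS Γ).wordProd ω)
  replace hlen : ω'.length = (racCS Γ).length ((racCS Γ).wordProd ω) := by rw [hp]; exact hlen.symm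
  have hred' : RacRed Γ ω' := racRed_of_isReduced (by rw [CoxeterSystem.IsReduced, ← hp, hlen])
  have := racRedWord_unique h hred' hp
  have hll := congrArg racQlen this
  simp only [racQlen_mk] at hll
  omega

theorem racRed_iff_isReduced {ω : List V} : RacRed Γ ω ↔ (racCS Γ).IsReduced ω :=
  ⟨fun h => racRed_length h, racRed_of_isReduced⟩

theorem racRed_mem_unique {ω ω' : List V} (h : RacRed Γ ω) (h' : RacRed Γ ω')
    (he : (racCS Γ).wordProd ω = (racCS Γ).wordProd ω') : ∀ x, x ∈ ω ↔ x ∈ ω' := by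
  intro x
  have := congrArg (racQmem x) (racRedWord_unique h h' he)
  simpa using this

theorem racExists_red_word (w : (racMatrix Γ).Group) :
    ∃ ω, RacRed Γ ω ∧ (racCS Γ).wordProd ω = w ∧ ω.length = (racCS Γ).length w := by
  obtain ⟨ω, hlen, hp⟩ := (racCS Γ).exists_reduced_word w
  replace hlen : ω.length = (racCS Γ).length w := by rw [hp]; exact hlen.symm
  exact ⟨ω, racRed_of_isReduced (by rw [CoxeterSystem.IsReduced, ← hp, hlen]), hp.symm, hlen⟩

/-- Left descent characterization. -/
theorem racDescent_iff {ω : List V} (h : RacRed Γ ω) {i : V} :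
    (racCS Γ).IsLeftDescent ((racCS Γ).wordProd ω) i ↔ RacCC Γ i ω := by
  constructor
  · intro hd
    by_contra hc
    have hred : RacRed Γ (i :: ω) := ⟨hc, h⟩
    have hlen := racRed_length hred
    unfold CoxeterSystem.IsLeftDescent at hd
    rw [← (racCS Γ).wordProd_cons, hlen, racRed_length h] at hd
    simp at hd
  · intro hc
    obtain ⟨α, β, rfl, hα, _⟩ := racSig_of_cc hc
    unfold CoxeterSystem.IsLeftDescent
    conv_lhs => rw [racPiCancel hα, ← mul_assoc, (racCS Γ).simple_mul_simple_self, one_mul]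
    rw [racRed_length h]
    calc (racCS Γ).length ((racCS Γ).wordProd (α ++ β)) ≤ (α ++ β).length :=
          (racCS Γ).length_wordProd_le _
      _ < (α ++ i :: β).length := by simp

end RacGroup
section RacSupp
set_option linter.unusedSectionVars false

open CoxeterSystem

variable {V : Type*} [DecidableEq V] (Γ : SimpleGraph V) [DecidableRel Γ.Adj]

/-- The support of an element: letters appearing in some (equivalently any) reduced word. -/
def racSupp (w : (racMatrix Γ).Group) : Set V :=
  {i | ∃ ω, RacRed Γ ω ∧ (racCS Γ).wordProd ω = w ∧ i ∈ ω}

variable {Γ}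

theorem racSupp_eq {ω : List V} (h : RacRed Γ ω) :
    racSupp Γ ((racCS Γ).wordProd ω) = {i | i ∈ ω} := by
  ext i
  constructor
  · rintro ⟨ω', h', hp, hi⟩
    exact (racRed_mem_unique h' h hp i).mp hi
  · intro hi
    exact ⟨ω, h, rfl, hi⟩

theorem racReduceWord (ω : List V) :
    ∃ ω', RacRed Γ ω' ∧ (racCS Γ).wordProd ω' = (racCS Γ).wordProd ω ∧
      ∀ x ∈ ω', x ∈ ω := by
  suffices H : ∀ n, ∀ ω : List V, ω.length ≤ n →
      ∃ ω', RacRed Γ ω' ∧ (racCS Γ).wordProd ω' = (racCS Γ).wordProd ω ∧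
        ∀ x ∈ ω', x ∈ ω by
    exact H ω.length ω le_rfl
  intro n
  induction n with
  | zero =>
      intro ω hl
      by_cases hr : RacRed Γ ω
      · exact ⟨ω, hr, rfl, fun x hx => hx⟩
      · obtain ⟨ω'', _, h2, _⟩ := racShorten hr
        omega
  | succ n ih =>
      intro ω hl
      by_cases hr : RacRed Γ ω
      · exact ⟨ω, hr, rfl, fun x hx => hx⟩
      · obtain ⟨ω'', h1, h2, h3⟩ := racShorten hr
        obtain ⟨ω', r1, r2, r3⟩ := ih ω'' (by omega)
        exact ⟨ω', r1, by rw [r2, h1], fun x hx => h3 x (r3 x hx)⟩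

theorem racSupp_mul_subset (u v : (racMatrix Γ).Group) :
    racSupp Γ (u * v) ⊆ racSupp Γ u ∪ racSupp Γ v := by
  obtain ⟨A, hA, hpA, _⟩ := racExists_red_word u
  obtain ⟨B, hB, hpB, _⟩ := racExists_red_word v
  obtain ⟨ω', h1, h2, h3⟩ := racReduceWord (Γ := Γ) (A ++ B)
  intro i hi
  have hp : (racCS Γ).wordProd ω' = u * v := by
    rw [h2, (racCS Γ).wordProd_append, hpA, hpB]
  rw [← hp, racSupp_eq h1] at hi
  rcases List.mem_append.mp (h3 i hi) with hx | hx
  · exact Or.inl (by rw [← hpA, racSupp_eq hA]; exact hx)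
  · exact Or.inr (by rw [← hpB, racSupp_eq hB]; exact hx)

theorem racRed_reverse {ω : List V} (h : RacRed Γ ω) : RacRed Γ ω.reverse := by
  rw [racRed_iff_isReduced] at h ⊢
  rwa [(racCS Γ).isReduced_reverse_iff]

theorem racSupp_inv (w : (racMatrix Γ).Group) : racSupp Γ w⁻¹ = racSupp Γ w := by
  have key : ∀ v : (racMatrix Γ).Group, racSupp Γ v⁻¹ ⊆ racSupp Γ v := by
    intro v i hi
    obtain ⟨A, hA, hpA, _⟩ := racExists_red_word v
    have hp : (racCS Γ).wordProd A.reverse = v⁻¹ := by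
      rw [(racCS Γ).wordProd_reverse, hpA]
    rw [← hp, racSupp_eq (racRed_reverse hA)] at hi
    rw [← hpA, racSupp_eq hA]
    simpa using hi
  refine subset_antisymm ?_ ?_
  · exact key w
  · intro i hi
    have := key w⁻¹
    rw [inv_inv] at this
    exact this hi

theorem racSupp_simple (i : V) : racSupp Γ ((racCS Γ).simple i) = {i} := by
  have h : RacRed Γ [i] := ⟨racCC_nil_iff.mp, trivial⟩
  have := racSupp_eq h
  rw [(racCS Γ).wordProd_singleton] at this
  rw [this]
  ext x
  simp

theorem racSupp_one : racSupp Γ (1 : (racMatrix Γ).Group) = ∅ := by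
  have := racSupp_eq (Γ := Γ) (ω := []) trivial
  rw [(racCS Γ).wordProd_nil] at this
  rw [this]
  ext x
  simp

theorem racSimple_eq (i : V) : (racCS Γ).simple i = (racMatrix Γ).simple i := by
  simp [racCS]

theorem racWord_mem_parabolic {Λ : Set V} (A : List V) (hs : ∀ x ∈ A, x ∈ Λ) :
    (racCS Γ).wordProd A ∈ racParabolic Γ Λ := by
  induction A with
  | nil =>
      rw [(racCS Γ).wordProd_nil]
      exact Subgroup.one_mem _
  | cons j A ih =>
      rw [(racCS Γ).wordProd_cons]
      refine Subgroup.mul_mem _ ?_ (ih fun x hx => hs x (by simp [hx]))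
      rw [racSimple_eq]
      exact Subgroup.subset_closure ⟨j, hs j (by simp), rfl⟩

theorem racMem_parabolic_iff {Λ : Set V} {w : (racMatrix Γ).Group} :
    w ∈ racParabolic Γ Λ ↔ racSupp Γ w ⊆ Λ := by
  constructor
  · intro hw
    induction hw using Subgroup.closure_induction with
    | mem x hx =>
        obtain ⟨i, hi, rfl⟩ := hx
        rw [← racSimple_eq, racSupp_simple]
        simpa using hi
    | one => rw [racSupp_one]; exact Set.empty_subset _
    | mul x y _ _ hx hy =>
        exact (racSupp_mul_subset x y).trans (Set.union_subset hx hy)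
    | inv x _ hx => rwa [racSupp_inv]
  · intro hs
    obtain ⟨A, hA, hpA, _⟩ := racExists_red_word w
    rw [← hpA, racSupp_eq hA] at hs
    rw [← hpA]
    exact racWord_mem_parabolic A fun x hx => hs hx

theorem racLeftDescent_mem_supp {w : (racMatrix Γ).Group} {i : V}
    (h : (racCS Γ).IsLeftDescent w i) : i ∈ racSupp Γ w := by
  obtain ⟨A, hA, hpA, _⟩ := racExists_red_word w
  rw [← hpA] at h
  rw [← hpA, racSupp_eq hA]
  exact racCC_mem ((racDescent_iff hA).mp h)

theorem racRightDescent_mem_supp {w : (racMatrix Γ).Group} {i : V}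
    (h : (racCS Γ).IsRightDescent w i) : i ∈ racSupp Γ w := by
  rw [← (racCS Γ).isLeftDescent_inv_iff] at h
  rw [← racSupp_inv]
  exact racLeftDescent_mem_supp h

theorem racSuppComm {w : (racMatrix Γ).Group} {i : V}
    (h : ∀ k ∈ racSupp Γ w, Γ.Adj i k) :
    (racCS Γ).simple i * w = w * (racCS Γ).simple i := by
  obtain ⟨A, hA, hpA, _⟩ := racExists_red_word w
  rw [← hpA]
  apply racCommWord
  intro x hx
  exact h x (by rw [← hpA, racSupp_eq hA]; exact hx)

end RacSupp
section RacAdd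
set_option linter.unusedSectionVars false

open CoxeterSystem

variable {V : Type*} [DecidableEq V] {Γ : SimpleGraph V} [DecidableRel Γ.Adj]

theorem racSplit2 {X : Type*} {A B η ρ : List X} {c : X} (h : A ++ B = η ++ c :: ρ) :
    (∃ μ, A = η ++ c :: μ ∧ ρ = μ ++ B) ∨ (∃ μ, η = A ++ μ ∧ B = μ ++ c :: ρ) := by
  rcases List.append_eq_append_iff.mp h with ⟨a', h1, h2⟩ | ⟨c', h1, h2⟩
  · exact Or.inr ⟨a', h1, h2⟩
  · cases c' with
    | nil =>
        simp only [List.append_nil] at h1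
        simp only [List.nil_append] at h2
        exact Or.inr ⟨[], by simp [h1], by simp [← h2]⟩
    | cons x μ =>
        simp only [List.cons_append, List.cons.injEq] at h2
        obtain ⟨rfl, rfl⟩ := h2
        exact Or.inl ⟨μ, h1, rfl⟩

theorem racNotRed_of {η α β : List V} {c : V} (hα : ∀ x ∈ α, Γ.Adj c x) :
    ¬ RacRed Γ (η ++ c :: (α ++ c :: β)) := by
  intro h
  exact (racRed_append_right (α := η) h).1 (racCC_iff.mpr ⟨α, β, rfl, hα⟩)

theorem racRed_extract {ω : List V} (hn : ¬ RacRed Γ ω) :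
    ∃ η c α β, ω = η ++ c :: (α ++ c :: β) ∧ ∀ x ∈ α, Γ.Adj c x := by
  induction ω with
  | nil => exact absurd trivial hn
  | cons j ω ih =>
      by_cases hc : RacCC Γ j ω
      · obtain ⟨α, β, rfl, hα⟩ := racCC_iff.mp hc
        exact ⟨[], j, α, β, rfl, hα⟩
      · obtain ⟨η, c, α, β, rfl, hα⟩ := ih fun h => hn ⟨hc, h⟩
        exact ⟨j :: η, c, α, β, rfl, hα⟩

theorem racLengthAdd {a b : (racMatrix Γ).Group}
    (hd : ∀ i, (racCS Γ).IsRightDescent a i → (racCS Γ).IsLeftDescent b i → False) :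
    (racCS Γ).length (a * b) = (racCS Γ).length a + (racCS Γ).length b := by
  obtain ⟨A, hA, hpA, hlA⟩ := racExists_red_word a
  obtain ⟨B, hB, hpB, hlB⟩ := racExists_red_word b
  have hred : RacRed Γ (A ++ B) := by
    by_contra hn
    obtain ⟨η, c, α, β, heq, hα⟩ := racRed_extract hn
    rcases racSplit2 heq with ⟨μ, hA', hρ⟩ | ⟨μ, _, hB'⟩
    · rcases racSplit2 hρ.symm with ⟨ν, hμ, _⟩ | ⟨ν, hα', hB''⟩
      · have : ¬ RacRed Γ A := by
          rw [hA', hμ]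
          exact racNotRed_of hα
        exact this hA
      · have hcB : RacCC Γ c B :=
          racCC_iff.mpr ⟨ν, β, hB'', fun x hx => hα x (by rw [hα']; simp [hx])⟩
        have hrevA : A.reverse = μ.reverse ++ c :: η.reverse := by
          rw [hA']
          simp
        have hcA : RacCC Γ c A.reverse := by
          rw [hrevA]
          refine racCC_iff.mpr ⟨μ.reverse, η.reverse, rfl, fun x hx => ?_⟩
          have hxμ : x ∈ μ := by simpa using hx
          exact hα x (by rw [hα']; simp [hxμ])
        have d1 : (racCS Γ).IsLeftDescent b c := by
          rw [← hpB]
          exact (racDescent_iff hB).mpr hcB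
        have d2 : (racCS Γ).IsRightDescent a c := by
          have h3 : (racCS Γ).IsLeftDescent ((racCS Γ).wordProd A.reverse) c :=
            (racDescent_iff (racRed_reverse hA)).mpr hcA
          rw [(racCS Γ).wordProd_reverse, hpA] at h3
          exact (racCS Γ).isLeftDescent_inv_iff.mp h3
        exact hd c d2 d1
    · have : ¬ RacRed Γ B := by
        rw [hB']
        exact racNotRed_of hα
      exact this hB
  have hl := racRed_length hred
  rw [(racCS Γ).wordProd_append, hpA, hpB, List.length_append] at hl
  omega

theorem racRed_concat_of_add {a b : (racMatrix Γ).Group} {A B : List V}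
    (hA : RacRed Γ A) (hB : RacRed Γ B) (hpA : (racCS Γ).wordProd A = a)
    (hpB : (racCS Γ).wordProd B = b) (hlA : A.length = (racCS Γ).length a)
    (hlB : B.length = (racCS Γ).length b)
    (hadd : (racCS Γ).length (a * b) = (racCS Γ).length a + (racCS Γ).length b) :
    RacRed Γ (A ++ B) := by
  apply racRed_of_isReduced
  rw [CoxeterSystem.IsReduced, (racCS Γ).wordProd_append, hpA, hpB, List.length_append]
  omega

theorem racSupp_additive {a b : (racMatrix Γ).Group}
    (hadd : (racCS Γ).length (a * b) = (racCS Γ).length a + (racCS Γ).length b) :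
    racSupp Γ (a * b) = racSupp Γ a ∪ racSupp Γ b := by
  obtain ⟨A, hA, hpA, hlA⟩ := racExists_red_word a
  obtain ⟨B, hB, hpB, hlB⟩ := racExists_red_word b
  have hred := racRed_concat_of_add hA hB hpA hpB hlA hlB hadd
  have hp : (racCS Γ).wordProd (A ++ B) = a * b := by
    rw [(racCS Γ).wordProd_append, hpA, hpB]
  rw [← hp, racSupp_eq hred, ← hpA, ← hpB, racSupp_eq hA, racSupp_eq hB]
  ext x
  simp

theorem racDescent_mul {a b : (racMatrix Γ).Group} {i : V}
    (hadd : (racCS Γ).length (a * b) = (racCS Γ).length a + (racCS Γ).length b)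
    (h : (racCS Γ).IsLeftDescent (a * b) i) :
    (racCS Γ).IsLeftDescent a i ∨
      ((racCS Γ).IsLeftDescent b i ∧ ∀ k ∈ racSupp Γ a, Γ.Adj i k) := by
  obtain ⟨A, hA, hpA, hlA⟩ := racExists_red_word a
  obtain ⟨B, hB, hpB, hlB⟩ := racExists_red_word b
  have hred := racRed_concat_of_add hA hB hpA hpB hlA hlB hadd
  have h' : RacCC Γ i (A ++ B) := by
    apply (racDescent_iff hred).mp
    rw [(racCS Γ).wordProd_append, hpA, hpB]
    exact h
  rcases racCC_append_iff.mp h' with hc | ⟨hall, hc⟩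
  · left
    rw [← hpA]
    exact (racDescent_iff hA).mpr hc
  · right
    refine ⟨by rw [← hpB]; exact (racDescent_iff hB).mpr hc, fun k hk => ?_⟩
    apply hall
    rw [← hpA, racSupp_eq hA] at hk
    exact hk

theorem racDescentR_mul {a b : (racMatrix Γ).Group} {i : V}
    (hadd : (racCS Γ).length (a * b) = (racCS Γ).length a + (racCS Γ).length b)
    (h : (racCS Γ).IsRightDescent (a * b) i) :
    (racCS Γ).IsRightDescent b i ∨
      ((racCS Γ).IsRightDescent a i ∧ ∀ k ∈ racSupp Γ b, Γ.Adj i k) := by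
  have hadd' : (racCS Γ).length (b⁻¹ * a⁻¹) =
      (racCS Γ).length b⁻¹ + (racCS Γ).length a⁻¹ := by
    rw [← mul_inv_rev, (racCS Γ).length_inv, (racCS Γ).length_inv, (racCS Γ).length_inv]
    omega
  have h' : (racCS Γ).IsLeftDescent (b⁻¹ * a⁻¹) i := by
    rw [← mul_inv_rev]
    exact (racCS Γ).isLeftDescent_inv_iff.mpr h
  rcases racDescent_mul hadd' h' with h1 | ⟨h1, h2⟩
  · left
    exact (racCS Γ).isLeftDescent_inv_iff.mp h1
  · right
    refine ⟨(racCS Γ).isLeftDescent_inv_iff.mp h1, ?_⟩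
    rwa [racSupp_inv] at h2

theorem racLeftDescent_mul_left {a b : (racMatrix Γ).Group} {i : V}
    (hadd : (racCS Γ).length (a * b) = (racCS Γ).length a + (racCS Γ).length b)
    (h : (racCS Γ).IsLeftDescent a i) : (racCS Γ).IsLeftDescent (a * b) i := by
  unfold CoxeterSystem.IsLeftDescent at h ⊢
  have h2 : (racCS Γ).length ((racCS Γ).simple i * (a * b)) ≤
      (racCS Γ).length ((racCS Γ).simple i * a) + (racCS Γ).length b := by
    rw [← mul_assoc]
    exact (racCS Γ).length_mul_le _ _
  omega

theorem racPeelR {v : (racMatrix Γ).Group} {i k : V}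
    (hi : (racCS Γ).IsRightDescent v i)
    (hk : (racCS Γ).IsLeftDescent (v * (racCS Γ).simple i) k) :
    (racCS Γ).IsLeftDescent v k := by
  have h1 := (racCS Γ).isRightDescent_iff.mp hi
  unfold CoxeterSystem.IsLeftDescent at hk ⊢
  have h2 : (racCS Γ).simple k * v =
      ((racCS Γ).simple k * (v * (racCS Γ).simple i)) * (racCS Γ).simple i := by
    rw [mul_assoc, mul_assoc, (racCS Γ).simple_mul_simple_self, mul_one]
  have h3 := (racCS Γ).length_mul_le
    ((racCS Γ).simple k * (v * (racCS Γ).simple i)) ((racCS Γ).simple i)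
  rw [(racCS Γ).length_simple] at h3
  rw [h2]
  omega

end RacAdd
section RacMain
set_option linter.unusedSectionVars false

open CoxeterSystem

variable {V : Type*} [DecidableEq V] {Γ : SimpleGraph V} [DecidableRel Γ.Adj]

theorem racBase {Λ : Set V} {u a v₃ v' e : (racMatrix Γ).Group}
    (hu : u ∉ racParabolic Γ Λ)
    (hadd : (racCS Γ).length (a * v₃⁻¹ * u * v' * e) =
      (racCS Γ).length a + (racCS Γ).length v₃ + (racCS Γ).length u +
      (racCS Γ).length v' + (racCS Γ).length e) :
    a * v₃⁻¹ * u * v' * e ∉ racParabolic Γ Λ := by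
  have hns : ¬ racSupp Γ u ⊆ Λ := fun hs => hu (racMem_parabolic_iff.mpr hs)
  obtain ⟨t, ht, htΛ⟩ := Set.not_subset.mp hns
  intro hmem
  apply htΛ
  apply racMem_parabolic_iff.mp hmem
  have li : (racCS Γ).length v₃⁻¹ = (racCS Γ).length v₃ := (racCS Γ).length_inv v₃
  have l1 := (racCS Γ).length_mul_le a v₃⁻¹
  have l2 := (racCS Γ).length_mul_le (a * v₃⁻¹) u
  have l3 := (racCS Γ).length_mul_le (a * v₃⁻¹ * u) v'
  have l4 := (racCS Γ).length_mul_le (a * v₃⁻¹ * u * v') e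
  have e2 : (racCS Γ).length (a * v₃⁻¹ * u) =
      (racCS Γ).length (a * v₃⁻¹) + (racCS Γ).length u := by omega
  have e3 : (racCS Γ).length (a * v₃⁻¹ * u * v') =
      (racCS Γ).length (a * v₃⁻¹ * u) + (racCS Γ).length v' := by omega
  have e4 : (racCS Γ).length (a * v₃⁻¹ * u * v' * e) =
      (racCS Γ).length (a * v₃⁻¹ * u * v') + (racCS Γ).length e := by omega
  rw [racSupp_additive e4, racSupp_additive e3, racSupp_additive e2]
  exact Set.mem_union_left _ (Set.mem_union_left _ (Set.mem_union_right _ ht))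

theorem racPeel {Λ : Set V} (n : ℕ)
    (IH : ∀ u₀ a v₃ v' e w w' : (racMatrix Γ).Group, u₀ ∉ racParabolic Γ Λ →
      (∀ i j, (racCS Γ).IsLeftDescent v₃ i → (racCS Γ).IsLeftDescent u₀ j →
        i ≠ j ∧ ¬ Γ.Adj i j) →
      (∀ i j, (racCS Γ).IsLeftDescent v' i → (racCS Γ).IsRightDescent u₀ j →
        i ≠ j ∧ ¬ Γ.Adj i j) →
      (racCS Γ).length (a * v₃⁻¹ * u₀ * v' * e) =
        (racCS Γ).length a + (racCS Γ).length v₃ + (racCS Γ).length u₀ +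
        (racCS Γ).length v' + (racCS Γ).length e →
      (racCS Γ).length w ≤ (racCS Γ).length v₃ →
      (racCS Γ).length w' ≤ (racCS Γ).length v' →
      (racCS Γ).length w + (racCS Γ).length w' ≤ n →
      w * (a * v₃⁻¹ * u₀ * v' * e) * w' ∉ racParabolic Γ Λ)
    (u a v₃ v' e w w' : (racMatrix Γ).Group) (hu : u ∉ racParabolic Γ Λ)
    (hv : ∀ i j, (racCS Γ).IsLeftDescent v₃ i → (racCS Γ).IsLeftDescent u j →
      i ≠ j ∧ ¬ Γ.Adj i j)
    (hv' : ∀ i j, (racCS Γ).IsLeftDescent v' i → (racCS Γ).IsRightDescent u j →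
      i ≠ j ∧ ¬ Γ.Adj i j)
    (hadd : (racCS Γ).length (a * v₃⁻¹ * u * v' * e) =
      (racCS Γ).length a + (racCS Γ).length v₃ + (racCS Γ).length u +
      (racCS Γ).length v' + (racCS Γ).length e)
    (hw : (racCS Γ).length w ≤ (racCS Γ).length v₃)
    (hw' : (racCS Γ).length w' ≤ (racCS Γ).length v')
    (hn : (racCS Γ).length w + (racCS Γ).length w' ≤ n + 1)
    (hwne : w ≠ 1) :
    w * (a * v₃⁻¹ * u * v' * e) * w' ∉ racParabolic Γ Λ := by
  obtain ⟨i, hi⟩ := (racCS Γ).exists_rightDescent_of_ne_one hwne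
  set S := (racCS Γ).simple i with hS
  have hw0 : (racCS Γ).length (w * S) + 1 = (racCS Γ).length w :=
    (racCS Γ).isRightDescent_iff.mp hi
  have hwpos : 1 ≤ (racCS Γ).length w := by omega
  have hzeq : (w * S) * (S * (a * v₃⁻¹ * u * v' * e)) * w' =
      w * (a * v₃⁻¹ * u * v' * e) * w' := by
    rw [mul_assoc w S (S * (a * v₃⁻¹ * u * v' * e)),
      (racCS Γ).simple_mul_simple_cancel_left]
  -- length bookkeeping
  have li : (racCS Γ).length v₃⁻¹ = (racCS Γ).length v₃ := (racCS Γ).length_inv v₃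
  have hyassoc : a * v₃⁻¹ * u * v' * e = a * (v₃⁻¹ * (u * (v' * e))) := by group
  have htot : (racCS Γ).length (a * (v₃⁻¹ * (u * (v' * e)))) =
      (racCS Γ).length a + (racCS Γ).length v₃ + (racCS Γ).length u +
      (racCS Γ).length v' + (racCS Γ).length e := by rw [← hyassoc]; exact hadd
  have r4 := (racCS Γ).length_mul_le v' e
  have r3 := (racCS Γ).length_mul_le u (v' * e)
  have r2 := (racCS Γ).length_mul_le v₃⁻¹ (u * (v' * e))
  have r1 := (racCS Γ).length_mul_le a (v₃⁻¹ * (u * (v' * e)))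
  have Eq1 : (racCS Γ).length (a * (v₃⁻¹ * (u * (v' * e)))) =
      (racCS Γ).length a + (racCS Γ).length (v₃⁻¹ * (u * (v' * e))) := by omega
  have Eq2 : (racCS Γ).length (v₃⁻¹ * (u * (v' * e))) =
      (racCS Γ).length v₃⁻¹ + (racCS Γ).length (u * (v' * e)) := by omega
  have Eq3 : (racCS Γ).length (u * (v' * e)) =
      (racCS Γ).length u + (racCS Γ).length (v' * e) := by omega
  have Eq4 : (racCS Γ).length (v' * e) =
      (racCS Γ).length v' + (racCS Γ).length e := by omega
  have hune : u ≠ 1 := fun h => hu (h ▸ Subgroup.one_mem _)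
  have hv₃ne : v₃ ≠ 1 := by
    intro h
    rw [h, (racCS Γ).length_one] at hw
    exact hwne ((racCS Γ).length_eq_zero_iff.mp (by omega))
  by_cases hdy : (racCS Γ).IsLeftDescent (a * v₃⁻¹ * u * v' * e) i
  · have hdyl : (racCS Γ).length (S * (a * v₃⁻¹ * u * v' * e)) + 1 =
        (racCS Γ).length (a * v₃⁻¹ * u * v' * e) :=
      (racCS Γ).isLeftDescent_iff.mp hdy
    have hdy' : (racCS Γ).IsLeftDescent (a * (v₃⁻¹ * (u * (v' * e)))) i :=
      hyassoc ▸ hdy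
    rcases racDescent_mul Eq1 hdy' with hDa | ⟨hd1, hAdja⟩
    · -- Case A1 : i is a left descent of the junk a
      have ha' : (racCS Γ).length (S * a) + 1 = (racCS Γ).length a :=
        (racCS Γ).isLeftDescent_iff.mp hDa
      have hsy : S * (a * v₃⁻¹ * u * v' * e) = (S * a) * v₃⁻¹ * u * v' * e := by group
      have hlen1 : (racCS Γ).length ((S * a) * v₃⁻¹ * u * v' * e) =
          (racCS Γ).length (S * a) + (racCS Γ).length v₃ + (racCS Γ).length u +
          (racCS Γ).length v' + (racCS Γ).length e := by
        rw [← hsy]; omega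
      intro hmem
      refine IH u (S * a) v₃ v' e (w * S) w' hu hv hv' hlen1 (by omega) hw' (by omega) ?_
      rw [show (w * S) * ((S * a) * v₃⁻¹ * u * v' * e) * w' =
        w * (a * v₃⁻¹ * u * v' * e) * w' from by rw [← hsy]; exact hzeq]
      exact hmem
    · rcases racDescent_mul Eq2 hd1 with hDv | ⟨hd2, hAdjv⟩
      · -- Case A2 : i is a right descent of v₃
        have hDvR : (racCS Γ).IsRightDescent v₃ i := (racCS Γ).isLeftDescent_inv_iff.mp hDv
        have hv₃' : (racCS Γ).length (v₃ * S) + 1 = (racCS Γ).length v₃ :=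
          (racCS Γ).isRightDescent_iff.mp hDvR
        have hcomm : S * a = a * S := racSuppComm hAdja
        have hsy : S * (a * v₃⁻¹ * u * v' * e) = a * (v₃ * S)⁻¹ * u * v' * e := by
          rw [mul_inv_rev, (racCS Γ).inv_simple]
          calc S * (a * v₃⁻¹ * u * v' * e) = (S * a) * v₃⁻¹ * u * v' * e := by group
            _ = (a * S) * v₃⁻¹ * u * v' * e := by rw [hcomm]
            _ = a * (S * v₃⁻¹) * u * v' * e := by group
        have hlen1 : (racCS Γ).length (a * (v₃ * S)⁻¹ * u * v' * e) =
            (racCS Γ).length a + (racCS Γ).length (v₃ * S) + (racCS Γ).length u +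
            (racCS Γ).length v' + (racCS Γ).length e := by
          rw [← hsy]; omega
        intro hmem
        refine IH u a (v₃ * S) v' e (w * S) w' hu
          (fun k j hk hj => hv k j (racPeelR hDvR hk) hj) hv' hlen1
          (by omega) hw' (by omega) ?_
        rw [show (w * S) * (a * (v₃ * S)⁻¹ * u * v' * e) * w' =
          w * (a * v₃⁻¹ * u * v' * e) * w' from by rw [← hsy]; exact hzeq]
        exact hmem
      · rcases racDescent_mul Eq3 hd2 with hDu | ⟨hd3, hAdju⟩
        · -- Case A3 : i would be a left descent of u : contradiction
          obtain ⟨k, hk⟩ := (racCS Γ).exists_leftDescent_of_ne_one hv₃ne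
          have hks : k ∈ racSupp Γ v₃⁻¹ := by
            rw [racSupp_inv]
            exact racLeftDescent_mem_supp hk
          exact ((hv k i hk hDu).2 (hAdjv k hks).symm).elim
        · rcases racDescent_mul Eq4 hd3 with hDv' | ⟨hd4, hAdjv'⟩
          · -- Case A4 : i would be a left descent of v' : contradiction
            obtain ⟨j, hj⟩ := (racCS Γ).exists_rightDescent_of_ne_one hune
            exact ((hv' i j hDv' hj).2 (hAdju j (racRightDescent_mem_supp hj))).elim
          · -- Case A5 : i is a left descent of the junk e
            have he' : (racCS Γ).length (S * e) + 1 = (racCS Γ).length e :=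
              (racCS Γ).isLeftDescent_iff.mp hd4
            have c1 : S * a = a * S := racSuppComm hAdja
            have c2 : S * v₃⁻¹ = v₃⁻¹ * S := racSuppComm hAdjv
            have c3 : S * u = u * S := racSuppComm hAdju
            have c4 : S * v' = v' * S := racSuppComm hAdjv'
            have hsy : S * (a * v₃⁻¹ * u * v' * e) = a * v₃⁻¹ * u * v' * (S * e) := by
              calc S * (a * v₃⁻¹ * u * v' * e)
                  = (S * a) * v₃⁻¹ * u * v' * e := by group
                _ = (a * S) * v₃⁻¹ * u * v' * e := by rw [c1]
                _ = a * (S * v₃⁻¹) * u * v' * e := by group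
                _ = a * (v₃⁻¹ * S) * u * v' * e := by rw [c2]
                _ = a * v₃⁻¹ * (S * u) * v' * e := by group
                _ = a * v₃⁻¹ * (u * S) * v' * e := by rw [c3]
                _ = a * v₃⁻¹ * u * (S * v') * e := by group
                _ = a * v₃⁻¹ * u * (v' * S) * e := by rw [c4]
                _ = a * v₃⁻¹ * u * v' * (S * e) := by group
            have hlen1 : (racCS Γ).length (a * v₃⁻¹ * u * v' * (S * e)) =
                (racCS Γ).length a + (racCS Γ).length v₃ + (racCS Γ).length u +
                (racCS Γ).length v' + (racCS Γ).length (S * e) := by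
              rw [← hsy]; omega
            intro hmem
            refine IH u a v₃ v' (S * e) (w * S) w' hu hv hv' hlen1
              (by omega) hw' (by omega) ?_
            rw [show (w * S) * (a * v₃⁻¹ * u * v' * (S * e)) * w' =
              w * (a * v₃⁻¹ * u * v' * e) * w' from by rw [← hsy]; exact hzeq]
            exact hmem
  · -- Case B : i is not a left descent of y; the letter gets prepended to the junk a
    have hnda : ¬ (racCS Γ).IsLeftDescent a i := fun h =>
      hdy (hyassoc ▸ racLeftDescent_mul_left Eq1 h)
    have ha1 : (racCS Γ).length (S * a) = (racCS Γ).length a + 1 :=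
      (racCS Γ).not_isLeftDescent_iff.mp hnda
    have hy1 : (racCS Γ).length (S * (a * v₃⁻¹ * u * v' * e)) =
        (racCS Γ).length (a * v₃⁻¹ * u * v' * e) + 1 :=
      (racCS Γ).not_isLeftDescent_iff.mp hdy
    have hsy : S * (a * v₃⁻¹ * u * v' * e) = (S * a) * v₃⁻¹ * u * v' * e := by group
    have hlen1 : (racCS Γ).length ((S * a) * v₃⁻¹ * u * v' * e) =
        (racCS Γ).length (S * a) + (racCS Γ).length v₃ + (racCS Γ).length u +
        (racCS Γ).length v' + (racCS Γ).length e := by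
      rw [← hsy]; omega
    intro hmem
    refine IH u (S * a) v₃ v' e (w * S) w' hu hv hv' hlen1 (by omega) hw' (by omega) ?_
    rw [show (w * S) * ((S * a) * v₃⁻¹ * u * v' * e) * w' =
      w * (a * v₃⁻¹ * u * v' * e) * w' from by rw [← hsy]; exact hzeq]
    exact hmem

end RacMain
section RacFinal
set_option linter.unusedSectionVars false

open CoxeterSystem

variable {V : Type*} [DecidableEq V] {Γ : SimpleGraph V} [DecidableRel Γ.Adj]

theorem racMain {Λ : Set V} (n : ℕ) :
    ∀ u a v₃ v' e w w' : (racMatrix Γ).Group, u ∉ racParabolic Γ Λ →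
      (∀ i j, (racCS Γ).IsLeftDescent v₃ i → (racCS Γ).IsLeftDescent u j →
        i ≠ j ∧ ¬ Γ.Adj i j) →
      (∀ i j, (racCS Γ).IsLeftDescent v' i → (racCS Γ).IsRightDescent u j →
        i ≠ j ∧ ¬ Γ.Adj i j) →
      (racCS Γ).length (a * v₃⁻¹ * u * v' * e) =
        (racCS Γ).length a + (racCS Γ).length v₃ + (racCS Γ).length u +
        (racCS Γ).length v' + (racCS Γ).length e →
      (racCS Γ).length w ≤ (racCS Γ).length v₃ →
      (racCS Γ).length w' ≤ (racCS Γ).length v' →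
      (racCS Γ).length w + (racCS Γ).length w' ≤ n →
      w * (a * v₃⁻¹ * u * v' * e) * w' ∉ racParabolic Γ Λ := by
  induction n with
  | zero =>
      intro u a v₃ v' e w w' hu hv hv' hadd hw hw' hn
      have hw1 : w = 1 := (racCS Γ).length_eq_zero_iff.mp (by omega)
      have hw'1 : w' = 1 := (racCS Γ).length_eq_zero_iff.mp (by omega)
      rw [hw1, hw'1, one_mul, mul_one]
      exact racBase hu hadd
  | succ n ih =>
      intro u a v₃ v' e w w' hu hv hv' hadd hw hw' hn
      by_cases hwne : w = 1
      · by_cases hw'ne : w' = 1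
        · rw [hwne, hw'ne, one_mul, mul_one]
          exact racBase hu hadd
        · -- pass to inverses
          subst hwne
          intro hmem
          have hmem' : (1 * (a * v₃⁻¹ * u * v' * e) * w')⁻¹ ∈ racParabolic Γ Λ :=
            inv_mem hmem
          have hu' : u⁻¹ ∉ racParabolic Γ Λ := fun h => hu (by simpa using inv_mem h)
          have hv₂ : ∀ i j, (racCS Γ).IsLeftDescent v' i →
              (racCS Γ).IsLeftDescent u⁻¹ j → i ≠ j ∧ ¬ Γ.Adj i j := by
            intro i j h1 h2
            exact hv' i j h1 ((racCS Γ).isLeftDescent_inv_iff.mp h2)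
          have hv₂' : ∀ i j, (racCS Γ).IsLeftDescent v₃ i →
              (racCS Γ).IsRightDescent u⁻¹ j → i ≠ j ∧ ¬ Γ.Adj i j := by
            intro i j h1 h2
            exact hv i j h1 ((racCS Γ).isRightDescent_inv_iff.mp h2)
          have hinv : e⁻¹ * v'⁻¹ * u⁻¹ * v₃ * a⁻¹ =
              (a * v₃⁻¹ * u * v' * e)⁻¹ := by group
          have hadd' : (racCS Γ).length (e⁻¹ * v'⁻¹ * u⁻¹ * v₃ * a⁻¹) =
              (racCS Γ).length e⁻¹ + (racCS Γ).length v' + (racCS Γ).length u⁻¹ +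
              (racCS Γ).length v₃ + (racCS Γ).length a⁻¹ := by
            rw [hinv, (racCS Γ).length_inv, (racCS Γ).length_inv,
              (racCS Γ).length_inv, (racCS Γ).length_inv]
            have h1 := (racCS Γ).length_inv v₃
            omega
          have key := racPeel n ih u⁻¹ e⁻¹ v' v₃ a⁻¹ w'⁻¹ 1 hu' hv₂ hv₂' hadd'
            (by rw [(racCS Γ).length_inv]; exact hw')
            (by rw [(racCS Γ).length_one]; omega)
            (by rw [(racCS Γ).length_inv, (racCS Γ).length_one]; omega)
            (by simpa using hw'ne)
          apply key
          rw [show w'⁻¹ * (e⁻¹ * v'⁻¹ * u⁻¹ * v₃ * a⁻¹) * 1 =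
            (1 * (a * v₃⁻¹ * u * v' * e) * w')⁻¹ from by group]
          exact hmem'
      · exact racPeel n ih u a v₃ v' e w w' hu hv hv' hadd hw hw' hn hwne

end RacFinal

theorem rac_sandwich_not_mem_parabolic' {V : Type*} [DecidableEq V]
    (Γ : SimpleGraph V) [DecidableRel Γ.Adj] (Λ : Set V)
    (u v v' w w' : (racMatrix Γ).Group)
    (hu : u ∉ racParabolic Γ Λ)
    (hv : ∀ i j : V, (racMatrix Γ).toCoxeterSystem.IsLeftDescent v i →
      (racMatrix Γ).toCoxeterSystem.IsLeftDescent u j → i ≠ j ∧ ¬ Γ.Adj i j)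
    (hv' : ∀ i j : V, (racMatrix Γ).toCoxeterSystem.IsLeftDescent v' i →
      (racMatrix Γ).toCoxeterSystem.IsRightDescent u j → i ≠ j ∧ ¬ Γ.Adj i j)
    (hw : (racMatrix Γ).toCoxeterSystem.length w ≤
      (racMatrix Γ).toCoxeterSystem.length v)
    (hw' : (racMatrix Γ).toCoxeterSystem.length w' ≤
      (racMatrix Γ).toCoxeterSystem.length v') :
    w * v⁻¹ * u * v' * w' ∉ racParabolic Γ Λ := by
  have hune : u ≠ 1 := fun h => hu (h ▸ Subgroup.one_mem _)
  -- first, lengths add in v⁻¹ * u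
  have step1 : (racCS Γ).length (v⁻¹ * u) = (racCS Γ).length v⁻¹ + (racCS Γ).length u := by
    apply racLengthAdd
    intro i h1 h2
    exact (hv i i ((racCS Γ).isRightDescent_inv_iff.mp h1) h2).1 rfl
  have step2 : (racCS Γ).length (v⁻¹ * u * v') =
      (racCS Γ).length (v⁻¹ * u) + (racCS Γ).length v' := by
    apply racLengthAdd
    intro i h1 h2
    rcases racDescentR_mul step1 h1 with hDu | ⟨hDv, hAdj⟩
    · exact (hv' i i h2 hDu).1 rfl
    · obtain ⟨j, hj⟩ := (racCS Γ).exists_leftDescent_of_ne_one hune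
      exact (hv i j ((racCS Γ).isRightDescent_inv_iff.mp hDv) hj).2
        (hAdj j (racLeftDescent_mem_supp hj))
  have hadd : (racCS Γ).length (1 * v⁻¹ * u * v' * 1) =
      (racCS Γ).length (1 : (racMatrix Γ).Group) + (racCS Γ).length v +
      (racCS Γ).length u + (racCS Γ).length v' +
      (racCS Γ).length (1 : (racMatrix Γ).Group) := by
    rw [show (1 : (racMatrix Γ).Group) * v⁻¹ * u * v' * 1 = v⁻¹ * u * v' from by group,
      (racCS Γ).length_one, step2, step1, (racCS Γ).length_inv]
    omega
  have key := racMain ((racCS Γ).length w + (racCS Γ).length w') u 1 v v' 1 w w'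
    hu hv hv' hadd hw hw' le_rfl
  intro hmem
  apply key
  rw [show w * (1 * v⁻¹ * u * v' * 1) * w' = w * v⁻¹ * u * v' * w' from by group]
  exact hmem

/-- **Conjugates avoid parabolic subgroups** (Corollary of Lemma 8.2 of the paper).
Let `Γ` be a simple graph with right-angled Coxeter system `cs`, `Λ ⊆ V`, and
`u ∉ W_Λ`.  Let `v, v'` be such that every left descent of `v` is distinct from and
non-adjacent to every left descent of `u` (every letter at the start of `v` does not
commute with any letter at the end of `u⁻¹`), and every left descent of `v'` is
distinct from and non-adjacent to every right descent of `u` (every letter at the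
start of `v'` does not commute with any letter at the end of `u`).  Then for all
`w, w'` with `ℓ(w) ≤ ℓ(v)` and `ℓ(w') ≤ ℓ(v')`, we have
`w * v⁻¹ * u * v' * w' ∉ W_Λ`. -/
theorem rac_sandwich_not_mem_parabolic {V : Type*} [DecidableEq V]
    (Γ : SimpleGraph V) [DecidableRel Γ.Adj] (Λ : Set V)
    (u v v' w w' : (racMatrix Γ).Group)
    (hu : u ∉ racParabolic Γ Λ)
    (hv : ∀ i j : V, (racMatrix Γ).toCoxeterSystem.IsLeftDescent v i →
      (racMatrix Γ).toCoxeterSystem.IsLeftDescent u j → i ≠ j ∧ ¬ Γ.Adj i j)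
    (hv' : ∀ i j : V, (racMatrix Γ).toCoxeterSystem.IsLeftDescent v' i →
      (racMatrix Γ).toCoxeterSystem.IsRightDescent u j → i ≠ j ∧ ¬ Γ.Adj i j)
    (hw : (racMatrix Γ).toCoxeterSystem.length w ≤
      (racMatrix Γ).toCoxeterSystem.length v)
    (hw' : (racMatrix Γ).toCoxeterSystem.length w' ≤
      (racMatrix Γ).toCoxeterSystem.length v') :
    w * v⁻¹ * u * v' * w' ∉ racParabolic Γ Λ :=
  rac_sandwich_not_mem_parabolic' Γ Λ u v v' w w' hu hv hv' hw hw'
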